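/- (Univariate interval type local limit theorem.) Let μₙ be probability measures on lattices Gₙ = vₙ + wₙℤ with wₙ > 0 and wₙ → 0, satisfying the local limit theorem sup_{x∈Gₙ} |μₙ({x})/wₙ − f(x)| → 0 for a continuous probability density f, and let [a,b] be a compact interval on which f ≥ c > 0. If (mₙ) is a sequence of positive reals with mₙ/wₙ → ∞, then sup over all intervals I ⊆ [a,b] with |I| ≥ mₙ of |μₙ(I)/μ(I) − 1| → 0, where μ = f·λ. -/

import Mathlib

open MeasureTheory Filter Topology

set_option maxHeartbeats 1000000


/-- Key deterministic lemma. -/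
lemma llt_key (V W : ℝ) (hW : 0 < W) (hW1 : W ≤ 1)
    (μ : Measure ℝ) [IsProbabilityMeasure μ]
    (hsupp : μ {x : ℝ | ∃ k : ℤ, x = V + W * k}ᶜ = 0)
    (f : ℝ → ℝ) (hf_nonneg : ∀ x, 0 ≤ f x) (hf_int : Integrable f)
    (a b c : ℝ) (hc : 0 < c) (hfc : ∀ x ∈ Set.Icc a b, c ≤ f x)
    (M ε₁ : ℝ) (hM0 : 0 ≤ M)
    (hM : ∀ x ∈ Set.Icc (a - 1) (b + 1), f x ≤ M)
    (hε₁ : 0 < ε₁)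
    (hUC : ∀ x ∈ Set.Icc (a - 1) (b + 1), ∀ y ∈ Set.Icc (a - 1) (b + 1),
      |x - y| ≤ W → |f x - f y| ≤ ε₁)
    (hLLT : ∀ k : ℤ, |(μ {V + W * (k : ℝ)}).toReal / W - f (V + W * (k : ℝ))| ≤ ε₁)
    (mm : ℝ) (hmm : 0 < mm) (hmmW : 4 * W ≤ mm)
    (I : Set ℝ) (hIsub : I ⊆ Set.Icc a b) (hIconn : I.OrdConnected)
    (hImeas : MeasurableSet I) (hIvol : ENNReal.ofReal mm ≤ volume I) :
    ∃ D : ℝ, mm ≤ D ∧ c * D ≤ ∫ x in I, f x ∧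
      |(μ I).toReal - ∫ x in I, f x| ≤ (2 * D + W) * ε₁ + 5 * W * M := by
  -- I is nonempty and bounded
  have hIne : I.Nonempty := by
    rcases Set.eq_empty_or_nonempty I with h | h
    · exfalso
      rw [h, measure_empty] at hIvol
      simp only [nonpos_iff_eq_zero, ENNReal.ofReal_eq_zero] at hIvol
      linarith
    · exact h
  have hbddA : BddAbove I := ⟨b, fun x hx => (hIsub hx).2⟩
  have hbddB : BddBelow I := ⟨a, fun x hx => (hIsub hx).1⟩
  set α := sInf I with hα
  set β := sSup I with hβ
  have hαβ : α ≤ β := csInf_le_csSup hIne hbddB hbddA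
  have haα : a ≤ α := le_csInf hIne fun x hx => (hIsub hx).1
  have hβb : β ≤ b := csSup_le hIne fun x hx => (hIsub hx).2
  have hIIcc : I ⊆ Set.Icc α β := fun x hx => ⟨csInf_le hbddB hx, le_csSup hbddA hx⟩
  have hIoo : Set.Ioo α β ⊆ I := by
    intro z hz
    obtain ⟨x, hxI, hxz⟩ := exists_lt_of_csInf_lt hIne hz.1
    obtain ⟨y, hyI, hzy⟩ := exists_lt_of_lt_csSup hIne hz.2
    exact hIconn.out hxI hyI ⟨hxz.le, hzy.le⟩
  set D := β - α with hD
  have hD0 : 0 ≤ D := by simp [hD]; linarith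
  have hvolI : volume I = ENNReal.ofReal D := by
    refine le_antisymm ?_ ?_
    · calc volume I ≤ volume (Set.Icc α β) := measure_mono hIIcc
        _ = ENNReal.ofReal D := by rw [Real.volume_Icc]
    · calc ENNReal.ofReal D = volume (Set.Ioo α β) := by rw [Real.volume_Ioo]
        _ ≤ volume I := measure_mono hIoo
  have hmD : mm ≤ D := by
    rw [hvolI] at hIvol
    exact (ENNReal.ofReal_le_ofReal_iff hD0).mp hIvol
  -- the integral over I equals integral over Ioo α β
  have hintI : ∫ x in I, f x = ∫ x in Set.Ioo α β, f x := by
    refine le_antisymm ?_ ?_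
    · calc ∫ x in I, f x ≤ ∫ x in Set.Icc α β, f x := by
            refine setIntegral_mono_set hf_int.integrableOn ?_ (HasSubset.Subset.eventuallyLE hIIcc)
            exact Eventually.of_forall fun x => hf_nonneg x
        _ = ∫ x in Set.Ioo α β, f x := integral_Icc_eq_integral_Ioo
    · refine setIntegral_mono_set hf_int.integrableOn ?_ (HasSubset.Subset.eventuallyLE hIoo)
      exact Eventually.of_forall fun x => hf_nonneg x
  have hlowint : c * D ≤ ∫ x in I, f x := by
    rw [hintI]
    have := setIntegral_ge_of_const_le (μ := volume) (c := c) (f := f)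
      (s := Set.Ioo α β) measurableSet_Ioo (by simp [Real.volume_Ioo])
      (fun x hx => hfc x ⟨by linarith [hx.1], by linarith [hx.2]⟩) hf_int.integrableOn
    rwa [Real.volume_real_Ioo_of_le hαβ, smul_eq_mul, mul_comm] at this
  -- lattice points
  set K₀ : ℤ := ⌈(α - V) / W⌉ with hK₀def
  set K₁ : ℤ := ⌊(β - V) / W⌋ with hK₁def
  have hX₀l : α ≤ V + W * K₀ := by
    have h := (div_le_iff₀ hW).mp (Int.le_ceil ((α - V) / W))
    nlinarith
  have hX₀u : V + W * K₀ < α + W := by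
    have h := Int.ceil_lt_add_one ((α - V) / W)
    have h2 : (K₀ : ℝ) < (α - V) / W + 1 := h
    have h3 : (K₀ : ℝ) * W < ((α - V) / W + 1) * W := by
      exact mul_lt_mul_of_pos_right h2 hW
    have h4 : (α - V) / W * W = α - V := div_mul_cancel₀ _ (ne_of_gt hW)
    nlinarith
  have hX₁u : V + W * K₁ ≤ β := by
    have h := (le_div_iff₀ hW).mp (Int.floor_le ((β - V) / W))
    nlinarith
  have hX₁l : β - W < V + W * K₁ := by
    have h : (β - V) / W - 1 < (K₁ : ℝ) := Int.sub_one_lt_floor _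
    have h3 : ((β - V) / W - 1) * W < (K₁ : ℝ) * W := mul_lt_mul_of_pos_right h hW
    have h4 : (β - V) / W * W = β - V := div_mul_cancel₀ _ (ne_of_gt hW)
    nlinarith
  have hK01 : K₀ + 2 ≤ K₁ := by
    have h : (2 : ℝ) < (K₁ : ℝ) - K₀ := by
      have : W * ((K₁ : ℝ) - K₀) > D - 2 * W := by nlinarith
      nlinarith
    have : (2 : ℤ) < K₁ - K₀ := by exact_mod_cast h
    omega
  set N := (K₁ - K₀).toNat with hNdef
  have hNZ : (N : ℤ) = K₁ - K₀ := Int.toNat_of_nonneg (by omega)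
  have hN2 : 2 ≤ N := by omega
  set g : ℕ → ℝ := fun i => V + W * ((K₀ : ℝ) + i) with hgdef
  have hgeq : ∀ i : ℕ, g i = V + W * ((K₀ : ℝ) + i) := fun i => rfl
  have hg0 : g 0 = V + W * K₀ := by rw [hgeq]; norm_num
  have hgN : g N = V + W * K₁ := by
    have h : (N : ℝ) = (K₁ : ℝ) - K₀ := by exact_mod_cast hNZ
    rw [hgeq, h]; ring
  have hgi : ∀ i : ℕ, i ≤ N → α ≤ g i ∧ g i ≤ β := by
    intro i hi
    have hi' : (i : ℝ) ≤ N := by exact_mod_cast hi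
    have hi0 : (0 : ℝ) ≤ i := Nat.cast_nonneg i
    rw [hgeq]
    constructor
    · have h1 : W * (K₀ : ℝ) ≤ W * ((K₀ : ℝ) + i) := mul_le_mul_of_nonneg_left (by linarith) hW.le
      linarith
    · have h1 : W * ((K₀ : ℝ) + i) ≤ W * ((K₀ : ℝ) + N) := mul_le_mul_of_nonneg_left (by linarith) hW.le
      have h2 : V + W * ((K₀ : ℝ) + N) = V + W * K₁ := by rw [← hgeq, hgN]
      linarith [hX₁u]
  have hgab : ∀ i : ℕ, i ≤ N → g i ∈ Set.Icc (a - 1) (b + 1) := by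
    intro i hi
    obtain ⟨h1, h2⟩ := hgi i hi
    exact ⟨by linarith, by linarith⟩
  set p : ℕ → ℝ := fun i => (μ {g i}).toReal with hpdef
  have hp : ∀ i : ℕ, |p i - W * f (g i)| ≤ W * ε₁ := by
    intro i
    have hcast : V + W * ((K₀ + (i : ℤ) : ℤ) : ℝ) = g i := by rw [hgeq]; push_cast; ring
    have h := hLLT (K₀ + i)
    rw [hcast] at h
    have heq : p i - W * f (g i) = W * (p i / W - f (g i)) := by field_simp
    rw [heq, abs_mul, abs_of_pos hW]
    exact mul_le_mul_of_nonneg_left h (le_of_lt hW)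
  have hppos : ∀ i, 0 ≤ p i := fun i => ENNReal.toReal_nonneg
  -- upper bound on μ I
  have hcover : I ⊆ (⋃ i ∈ Finset.range (N+1), {g i}) ∪ {x : ℝ | ∃ k : ℤ, x = V + W * k}ᶜ := by
    intro x hx
    by_cases hxL : ∃ k : ℤ, x = V + W * k
    · left
      obtain ⟨k, rfl⟩ := hxL
      have hxm := hIIcc hx
      have hk0 : K₀ ≤ k := by
        refine Int.ceil_le.mpr ?_
        rw [div_le_iff₀ hW]
        have := hxm.1
        nlinarith
      have hk1 : k ≤ K₁ := by
        refine Int.le_floor.mpr ?_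
        rw [le_div_iff₀ hW]
        have := hxm.2
        nlinarith
      have hmemr : (k - K₀).toNat ∈ Finset.range (N+1) := by
        rw [Finset.mem_range]; omega
      refine Set.mem_biUnion hmemr ?_
      · have : ((((k - K₀).toNat : ℕ)) : ℝ) = (k : ℝ) - K₀ := by
          have : (((k - K₀).toNat : ℕ) : ℤ) = k - K₀ := Int.toNat_of_nonneg (by omega)
          exact_mod_cast this
        rw [Set.mem_singleton_iff, hgeq, this]
        ring
    · right; exact hxL
  have hμupper : (μ I).toReal ≤ ∑ i ∈ Finset.range (N+1), p i := by
    have h1 : μ I ≤ ∑ i ∈ Finset.range (N+1), μ {g i} := by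
      calc μ I ≤ μ ((⋃ i ∈ Finset.range (N+1), {g i}) ∪ {x : ℝ | ∃ k : ℤ, x = V + W * k}ᶜ) :=
            measure_mono hcover
        _ ≤ μ (⋃ i ∈ Finset.range (N+1), {g i}) + μ {x : ℝ | ∃ k : ℤ, x = V + W * k}ᶜ :=
            measure_union_le _ _
        _ = μ (⋃ i ∈ Finset.range (N+1), {g i}) := by rw [hsupp, add_zero]
        _ ≤ ∑ i ∈ Finset.range (N+1), μ {g i} := measure_biUnion_finset_le _ _
    have h2 : (∑ i ∈ Finset.range (N+1), μ {g i}) ≠ ⊤ :=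
      (ENNReal.sum_lt_top.mpr fun i _ => measure_lt_top μ _).ne
    calc (μ I).toReal ≤ (∑ i ∈ Finset.range (N+1), μ {g i}).toReal := ENNReal.toReal_mono h2 h1
      _ = ∑ i ∈ Finset.range (N+1), p i := ENNReal.toReal_sum fun i _ => (measure_lt_top μ _).ne
  -- lower bound on μ I
  have hμlower : ∑ i ∈ Finset.Icc 1 (N-1), p i ≤ (μ I).toReal := by
    have hginj : ∀ i j : ℕ, i ≠ j → g i ≠ g j := by
      intro i j hij
      rw [hgeq, hgeq]
      intro hEq
      have : (i : ℝ) = j := by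
        have := mul_left_cancel₀ (ne_of_gt hW) (by linarith : W * ((K₀:ℝ) + i) = W * ((K₀:ℝ) + j))
        linarith
      exact hij (by exact_mod_cast this)
    have hdisj : Set.PairwiseDisjoint (↑(Finset.Icc 1 (N-1))) (fun i => ({g i} : Set ℝ)) := by
      intro i _ j _ hij
      simp only [Function.onFun, Set.disjoint_singleton_left, Set.mem_singleton_iff]
      exact hginj i j hij
    have hsub : (⋃ i ∈ Finset.Icc 1 (N-1), ({g i} : Set ℝ)) ⊆ I := by
      intro x hx
      simp only [Set.mem_iUnion, Set.mem_singleton_iff, exists_prop] at hx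
      obtain ⟨i, hi, rfl⟩ := hx
      rw [Finset.mem_Icc] at hi
      apply hIoo
      constructor
      · have h1 : (1 : ℝ) ≤ (i : ℝ) := by exact_mod_cast hi.1
        rw [hgeq]
        nlinarith [hX₀l]
      · have h1 : (i : ℝ) ≤ (N : ℝ) - 1 := by
          have : (i : ℤ) ≤ (N : ℤ) - 1 := by omega
          exact_mod_cast this
        have hNcast : (N : ℝ) = (K₁ : ℝ) - K₀ := by exact_mod_cast hNZ
        rw [hgeq]
        nlinarith [hX₁u]
    have h1 : (∑ i ∈ Finset.Icc 1 (N-1), μ {g i}) ≤ μ I := by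
      rw [← measure_biUnion_finset hdisj fun i _ => measurableSet_singleton _]
      exact measure_mono hsub
    calc ∑ i ∈ Finset.Icc 1 (N-1), p i
        = (∑ i ∈ Finset.Icc 1 (N-1), μ {g i}).toReal :=
          (ENNReal.toReal_sum fun i _ => (measure_lt_top μ _).ne).symm
      _ ≤ (μ I).toReal := ENNReal.toReal_mono (measure_lt_top μ _).ne h1
  -- sum bounds
  set S := ∑ i ∈ Finset.range (N+1), f (g i) with hSdef
  have hup2 : ∑ i ∈ Finset.range (N+1), p i ≤ W * S + ((N:ℝ)+1) * (W * ε₁) := by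
    have h : ∀ i ∈ Finset.range (N+1), p i ≤ W * f (g i) + W * ε₁ := by
      intro i _
      have := (abs_le.mp (hp i)).2
      linarith
    calc ∑ i ∈ Finset.range (N+1), p i ≤ ∑ i ∈ Finset.range (N+1), (W * f (g i) + W * ε₁) :=
          Finset.sum_le_sum h
      _ = W * S + ((N:ℝ)+1) * (W * ε₁) := by
          rw [Finset.sum_add_distrib, ← Finset.mul_sum, Finset.sum_const, Finset.card_range]
          push_cast; ring
  have hsplitsum : S = f (g 0) + f (g N) + ∑ i ∈ Finset.Icc 1 (N-1), f (g i) := by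
    have hEq : Finset.range (N+1) = insert 0 (insert N (Finset.Icc 1 (N-1))) := by
      ext i
      simp only [Finset.mem_range, Finset.mem_insert, Finset.mem_Icc]
      omega
    rw [hSdef, hEq, Finset.sum_insert, Finset.sum_insert]
    · ring
    · simp only [Finset.mem_Icc]; omega
    · simp only [Finset.mem_insert, Finset.mem_Icc]; omega
  have hcard1 : ((Finset.Icc 1 (N-1)).card : ℝ) ≤ (N:ℝ) + 1 := by
    have : (Finset.Icc 1 (N-1)).card ≤ N + 1 := by
      rw [Nat.card_Icc]; omega
    exact_mod_cast this
  have hfgle : ∀ i : ℕ, i ≤ N → f (g i) ≤ M := fun i hi => hM _ (hgab i hi)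
  have hlo2 : W * S - 2 * (W * M) - ((N:ℝ)+1) * (W * ε₁) ≤ ∑ i ∈ Finset.Icc 1 (N-1), p i := by
    have h : ∀ i ∈ Finset.Icc 1 (N-1), W * f (g i) - W * ε₁ ≤ p i := by
      intro i _
      have := (abs_le.mp (hp i)).1
      linarith
    have h2 : ∑ i ∈ Finset.Icc 1 (N-1), (W * f (g i) - W * ε₁) ≤ ∑ i ∈ Finset.Icc 1 (N-1), p i :=
      Finset.sum_le_sum h
    have h3 : ∑ i ∈ Finset.Icc 1 (N-1), (W * f (g i) - W * ε₁)
        = W * (∑ i ∈ Finset.Icc 1 (N-1), f (g i)) - ((Finset.Icc 1 (N-1)).card : ℝ) * (W * ε₁) := by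
      rw [Finset.sum_sub_distrib, ← Finset.mul_sum, Finset.sum_const]
      push_cast; ring
    have h4 : W * (∑ i ∈ Finset.Icc 1 (N-1), f (g i)) = W * S - W * f (g 0) - W * f (g N) := by
      rw [hsplitsum]; ring
    have h5 : W * f (g 0) ≤ W * M := mul_le_mul_of_nonneg_left (hfgle 0 (by omega)) hW.le
    have h6 : W * f (g N) ≤ W * M := mul_le_mul_of_nonneg_left (hfgle N le_rfl) hW.le
    have h7 : ((Finset.Icc 1 (N-1)).card : ℝ) * (W * ε₁) ≤ ((N:ℝ)+1) * (W * ε₁) :=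
      mul_le_mul_of_nonneg_right hcard1 (by positivity)
    linarith
  have hμabs : |(μ I).toReal - W * S| ≤ ((N:ℝ)+1) * (W * ε₁) + 2 * (W * M) := by
    rw [abs_le]
    constructor
    · linarith [hμlower, hlo2, mul_nonneg hW.le hM0]
    · linarith [hμupper, hup2, mul_nonneg hW.le hM0]
  -- Riemann sum estimate
  have hii : ∀ (x y : ℝ), IntervalIntegrable f volume x y := fun x y => hf_int.intervalIntegrable
  have hadj : ∑ i ∈ Finset.range N, ∫ x in g i..g (i+1), f x = ∫ x in (g 0)..(g N), f x :=
    intervalIntegral.sum_integral_adjacent_intervals fun k _ => hii _ _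
  have hgsucc : ∀ i : ℕ, g (i+1) = g i + W := by
    intro i; rw [hgeq, hgeq]; push_cast; ring
  have hcell : ∀ i : ℕ, i < N → |(∫ x in g i..g (i+1), f x) - W * f (g i)| ≤ W * ε₁ := by
    intro i hi
    have hgle : g i ≤ g (i+1) := by rw [hgsucc]; linarith
    have hgiN := hgi i hi.le
    have hgi1N := hgi (i+1) hi
    have hconst : (∫ x in g i..g (i+1), f (g i)) = W * f (g i) := by
      rw [intervalIntegral.integral_const, hgsucc i, smul_eq_mul]
      ring
    have hsub : (∫ x in g i..g (i+1), f x) - W * f (g i)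
        = ∫ x in g i..g (i+1), (f x - f (g i)) := by
      rw [intervalIntegral.integral_sub (hii _ _) intervalIntegrable_const, hconst]
    rw [hsub]
    have hbound : ∀ x ∈ Set.uIoc (g i) (g (i+1)), ‖f x - f (g i)‖ ≤ ε₁ := by
      intro x hx
      rw [Set.uIoc_of_le hgle] at hx
      have hx1 : g i < x := hx.1
      have hx2 : x ≤ g (i+1) := hx.2
      have hx2' : x ≤ g i + W := by rw [← hgsucc]; exact hx2
      have hxab : x ∈ Set.Icc (a-1) (b+1) :=
        ⟨by linarith [hgiN.1], by linarith [hgi1N.2]⟩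
      rw [Real.norm_eq_abs]
      exact hUC x hxab (g i) (hgab i hi.le) (by rw [abs_le]; constructor <;> linarith)
    have hnc := intervalIntegral.norm_integral_le_of_norm_le_const hbound
    rw [Real.norm_eq_abs] at hnc
    calc |∫ x in g i..g (i+1), (f x - f (g i))| ≤ ε₁ * |g (i+1) - g i| := hnc
      _ = W * ε₁ := by rw [hgsucc i]; rw [show g i + W - g i = W by ring, abs_of_pos hW]; ring
  have hRie : |(∫ x in (g 0)..(g N), f x) - W * ∑ i ∈ Finset.range N, f (g i)| ≤ (N:ℝ) * (W * ε₁) := by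
    rw [← hadj, Finset.mul_sum, ← Finset.sum_sub_distrib]
    calc |∑ i ∈ Finset.range N, ((∫ x in g i..g (i+1), f x) - W * f (g i))|
        ≤ ∑ i ∈ Finset.range N, |(∫ x in g i..g (i+1), f x) - W * f (g i)| :=
          Finset.abs_sum_le_sum_abs _ _
      _ ≤ ∑ i ∈ Finset.range N, (W * ε₁) :=
          Finset.sum_le_sum fun i hi => hcell i (Finset.mem_range.mp hi)
      _ = (N:ℝ) * (W * ε₁) := by
          rw [Finset.sum_const, Finset.card_range, nsmul_eq_mul]
  -- edge estimates
  have hg0b : α ≤ g 0 ∧ g 0 < α + W := by rw [hg0]; exact ⟨hX₀l, hX₀u⟩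
  have hgNb : β - W < g N ∧ g N ≤ β := by rw [hgN]; exact ⟨hX₁l, hX₁u⟩
  have hedge1 : |∫ x in α..g 0, f x| ≤ W * M := by
    have hb : ∀ x ∈ Set.uIoc α (g 0), ‖f x‖ ≤ M := by
      intro x hx
      rw [Set.uIoc_of_le hg0b.1] at hx
      have hxab : x ∈ Set.Icc (a-1) (b+1) :=
        ⟨by linarith [hx.1], by linarith [hx.2, (hgi 0 (by omega)).2]⟩
      rw [Real.norm_eq_abs, abs_of_nonneg (hf_nonneg x)]
      exact hM x hxab
    have hnc := intervalIntegral.norm_integral_le_of_norm_le_const hb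
    rw [Real.norm_eq_abs] at hnc
    calc |∫ x in α..g 0, f x| ≤ M * |g 0 - α| := hnc
      _ ≤ M * W := by
          refine mul_le_mul_of_nonneg_left ?_ hM0
          rw [abs_of_nonneg (by linarith [hg0b.1])]
          linarith [hg0b.2]
      _ = W * M := mul_comm _ _
  have hedge2 : |∫ x in g N..β, f x| ≤ W * M := by
    have hb : ∀ x ∈ Set.uIoc (g N) β, ‖f x‖ ≤ M := by
      intro x hx
      rw [Set.uIoc_of_le hgNb.2] at hx
      have hxab : x ∈ Set.Icc (a-1) (b+1) :=
        ⟨by linarith [hx.1, (hgi N le_rfl).1], by linarith [hx.2]⟩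
      rw [Real.norm_eq_abs, abs_of_nonneg (hf_nonneg x)]
      exact hM x hxab
    have hnc := intervalIntegral.norm_integral_le_of_norm_le_const hb
    rw [Real.norm_eq_abs] at hnc
    calc |∫ x in g N..β, f x| ≤ M * |β - g N| := hnc
      _ ≤ M * W := by
          refine mul_le_mul_of_nonneg_left ?_ hM0
          rw [abs_of_nonneg (by linarith [hgNb.2])]
          linarith [hgNb.1]
      _ = W * M := mul_comm _ _
  have hsplitint : ∫ x in α..β, f x
      = (∫ x in α..g 0, f x) + (∫ x in (g 0)..(g N), f x) + (∫ x in g N..β, f x) := by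
    rw [intervalIntegral.integral_add_adjacent_intervals (hii α (g 0)) (hii (g 0) (g N)),
      intervalIntegral.integral_add_adjacent_intervals (hii α (g N)) (hii (g N) β)]
  have hintI2 : ∫ x in I, f x = ∫ x in α..β, f x := by
    rw [hintI, intervalIntegral.integral_of_le hαβ, integral_Ioc_eq_integral_Ioo]
  -- final combination
  have hNW : (N:ℝ) * W ≤ D := by
    have hNc : (N:ℝ) = (K₁:ℝ) - K₀ := by exact_mod_cast hNZ
    nlinarith [hX₀l, hX₁u]
  refine ⟨D, hmD, hlowint, ?_⟩
  have hSsplit : W * S = W * (∑ i ∈ Finset.range N, f (g i)) + W * f (g N) := by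
    rw [hSdef, Finset.sum_range_succ]; ring
  have hfgN : W * f (g N) ≤ W * M := mul_le_mul_of_nonneg_left (hfgle N le_rfl) hW.le
  have h0le : 0 ≤ W * f (g N) := mul_nonneg hW.le (hf_nonneg _)
  have h8 : |W * S - ∫ x in I, f x| ≤ (N:ℝ) * (W * ε₁) + 3 * (W * M) := by
    rw [hintI2, hsplitint, hSsplit, abs_le]
    constructor
    · linarith [abs_le.mp hRie, abs_le.mp hedge1, abs_le.mp hedge2]
    · linarith [abs_le.mp hRie, abs_le.mp hedge1, abs_le.mp hedge2]
  have hNWp : (2*(N:ℝ)+1)*W ≤ 2*D + W := by nlinarith [hNW]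
  have hprod : ((N:ℝ)+1) * (W * ε₁) + (N:ℝ) * (W * ε₁) ≤ (2 * D + W) * ε₁ := by
    calc ((N:ℝ)+1)*(W*ε₁) + (N:ℝ)*(W*ε₁) = ((2*(N:ℝ)+1)*W)*ε₁ := by ring
      _ ≤ (2*D+W)*ε₁ := mul_le_mul_of_nonneg_right hNWp hε₁.le
  have htri : |(μ I).toReal - ∫ x in I, f x|
      ≤ |(μ I).toReal - W * S| + |W * S - ∫ x in I, f x| := abs_sub_le _ _ _
  linarith [hμabs, h8, htri, hprod]



/-- Univariate interval type local limit theorem: if `μₙ` lives on the lattice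
`Gₙ = vₙ + wₙℤ`, the local limit theorem holds with continuous density limit `f`,
`f ≥ c > 0` on `[a,b]`, and the minimal lengths satisfy `mₙ/wₙ → ∞`, then
`μₙ(I)/μ(I) → 1` uniformly over intervals `I ⊆ [a,b]` with `|I| ≥ mₙ`, where `μ = f·λ`. -/
theorem stmt_7 (v w : ℕ → ℝ) (hw : ∀ n, 0 < w n) (hw0 : Tendsto w atTop (𝓝 0))
    (μn : ℕ → Measure ℝ) [∀ n, IsProbabilityMeasure (μn n)]
    (hsupp : ∀ n, (μn n) {x : ℝ | ∃ k : ℤ, x = v n + w n * k}ᶜ = 0)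
    (f : ℝ → ℝ) (hf_cont : Continuous f) (hf_nonneg : ∀ x, 0 ≤ f x)
    (hf_int : Integrable f) (hf_one : ∫ x, f x = 1)
    (a b c : ℝ) (hab : a < b) (hc : 0 < c) (hfc : ∀ x ∈ Set.Icc a b, c ≤ f x)
    (hLLT : ∀ ε > 0, ∃ N : ℕ, ∀ n ≥ N, ∀ k : ℤ,
      |((μn n) {v n + w n * (k : ℝ)}).toReal / w n - f (v n + w n * (k : ℝ))| < ε)
    (m : ℕ → ℝ) (hm : ∀ n, 0 < m n)
    (hmw : Tendsto (fun n => m n / w n) atTop atTop) :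
    ∀ ε > 0, ∃ N : ℕ, ∀ n ≥ N, ∀ I : Set ℝ, I ⊆ Set.Icc a b → I.OrdConnected →
      MeasurableSet I → ENNReal.ofReal (m n) ≤ volume I →
      |((μn n) I).toReal / (∫ x in I, f x) - 1| < ε := by
  intro ε hε
  -- maximum of f on the enlarged interval
  obtain ⟨x₀, hx₀mem, hx₀⟩ := isCompact_Icc.exists_isMaxOn
    (Set.nonempty_Icc.mpr (by linarith : a - 1 ≤ b + 1)) hf_cont.continuousOn
  set M := f x₀ with hMdef
  have hM : ∀ x ∈ Set.Icc (a - 1) (b + 1), f x ≤ M := fun x hx => hx₀ hx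
  have hM0 : 0 ≤ M := hf_nonneg x₀
  set ε₁ := c * ε / 6 with hε₁def
  have hε₁ : 0 < ε₁ := by positivity
  -- uniform continuity
  obtain ⟨δ, hδ, hδ'⟩ := Metric.uniformContinuousOn_iff_le.mp
    (isCompact_Icc.uniformContinuousOn_of_continuous hf_cont.continuousOn) ε₁ hε₁
  -- the LLT index
  obtain ⟨N₁, hN₁⟩ := hLLT ε₁ hε₁
  set R := 10 * M / (c * ε) + 4 with hRdef
  have hR4 : 4 ≤ R := by
    rw [hRdef]
    have : 0 ≤ 10 * M / (c * ε) := by positivity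
    linarith
  have hev : ∀ᶠ n in atTop, w n < min δ 1 ∧ R ≤ m n / w n := by
    have h1 : ∀ᶠ n in atTop, w n < min δ 1 :=
      hw0.eventually_lt_const (lt_min hδ one_pos)
    exact h1.and (hmw.eventually_ge_atTop R)
  obtain ⟨N₂, hN₂⟩ := eventually_atTop.mp hev
  refine ⟨max N₁ N₂, fun n hn I hIsub hIconn hImeas hIvol => ?_⟩
  have hn₁ : N₁ ≤ n := le_trans (le_max_left _ _) hn
  have hn₂ : N₂ ≤ n := le_trans (le_max_right _ _) hn
  obtain ⟨hwn, hRn⟩ := hN₂ n hn₂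
  have hwδ : w n < δ := lt_of_lt_of_le hwn (min_le_left _ _)
  have hw1 : w n ≤ 1 := le_of_lt (lt_of_lt_of_le hwn (min_le_right _ _))
  have hRw : R * w n ≤ m n := (le_div_iff₀ (hw n)).mp hRn
  have hmmW : 4 * w n ≤ m n := by nlinarith [hw n]
  have hUC : ∀ x ∈ Set.Icc (a - 1) (b + 1), ∀ y ∈ Set.Icc (a - 1) (b + 1),
      |x - y| ≤ w n → |f x - f y| ≤ ε₁ := by
    intro x hx y hy hxy
    have := hδ' x hx y hy (by rw [Real.dist_eq]; linarith)
    rwa [Real.dist_eq] at this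
  have hLLT' : ∀ k : ℤ,
      |((μn n) {v n + w n * (k : ℝ)}).toReal / w n - f (v n + w n * (k : ℝ))| ≤ ε₁ :=
    fun k => (hN₁ n hn₁ k).le
  obtain ⟨D, hmD, hJc, hdiff⟩ := llt_key (v n) (w n) (hw n) hw1 (μn n) (hsupp n) f
    hf_nonneg hf_int a b c hc hfc M ε₁ hM0 hM hε₁ hUC hLLT' (m n) (hm n) hmmW
    I hIsub hIconn hImeas hIvol
  set J := ∫ x in I, f x with hJdef
  have hD0 : 0 < D := lt_of_lt_of_le (hm n) hmD
  have hcD : 0 < c * D := by positivity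
  have hJpos : 0 < J := lt_of_lt_of_le hcD hJc
  have hWD : w n ≤ D := by nlinarith [hw n]
  have hb1 : |((μn n) I).toReal - J| ≤ 3 * D * ε₁ + 5 * (w n * M) := by
    have h1 : (2 * D + w n) * ε₁ ≤ 3 * D * ε₁ :=
      mul_le_mul_of_nonneg_right (by linarith) hε₁.le
    calc |((μn n) I).toReal - J| ≤ (2 * D + w n) * ε₁ + 5 * (w n) * M := hdiff
      _ ≤ 3 * D * ε₁ + 5 * (w n * M) := by linarith
  have heq : ((μn n) I).toReal / J - 1 = (((μn n) I).toReal - J) / J := by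
    field_simp
  rw [heq, abs_div, abs_of_pos hJpos]
  have h2 : |((μn n) I).toReal - J| / J ≤ |((μn n) I).toReal - J| / (c * D) :=
    div_le_div_of_nonneg_left (abs_nonneg _) hcD hJc
  have h3 : |((μn n) I).toReal - J| / (c * D) ≤ (3 * D * ε₁ + 5 * (w n * M)) / (c * D) := by
    exact (div_le_div_iff_of_pos_right hcD).mpr hb1
  have h4 : (3 * D * ε₁ + 5 * (w n * M)) / (c * D) < ε := by
    rw [div_lt_iff₀ hcD]
    have hkey : 10 * M / (c * ε) * (c * ε) = 10 * M :=
      div_mul_cancel₀ _ (by positivity)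
    -- c*ε*D ≥ c*ε*m n ≥ c*ε*R*w n = 10*M*w n + 4*c*ε*w n
    have hDm : c * ε * D ≥ c * ε * (R * w n) := by nlinarith
    have hexp : c * ε * (R * w n) = 10 * M * w n + 4 * (c * ε) * w n := by
      rw [hRdef]; nlinarith [hkey]
    have hwp := hw n
    rw [hε₁def]
    nlinarith
  calc |((μn n) I).toReal - J| / J ≤ |((μn n) I).toReal - J| / (c * D) := h2
    _ ≤ (3 * D * ε₁ + 5 * (w n * M)) / (c * D) := h3
    _ < ε := h4
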